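/- Every simple graph on n vertices that contains no clique on r+1 vertices (where r ≥ 1) has at most (1 - 1/r)·n²/2 edges. -/

import Mathlib

open Finset SimpleGraph

private lemma turan_aux (N : ℕ) : ∀ {V : Type*} [Fintype V] [DecidableEq V]
    (G : SimpleGraph V) [DecidableRel G.Adj] (r : ℕ), 1 ≤ r →
    Fintype.card V + r ≤ N → G.CliqueFree (r + 1) →
    (G.edgeFinset.card : ℝ) ≤ (1 - 1 / (r : ℝ)) * (Fintype.card V : ℝ) ^ 2 / 2 := by
  induction N with
  | zero => intro V _ _ G _ r hr hN hfree; omega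
  | succ N IH =>
    intro V _ _ G _ r hr hN hfree
    by_cases hcf : G.CliqueFree r
    · -- reduce r
      match r, hr with
      | 1, _ =>
        -- CliqueFree 2 : no edges
        have he : G.edgeFinset = ∅ := by
          rw [Finset.eq_empty_iff_forall_notMem]
          intro e he
          induction e with
          | h a b =>
            rw [mem_edgeFinset, mem_edgeSet] at he
            refine hfree {a, b} ⟨?_, Finset.card_pair he.ne⟩
            rw [Finset.coe_insert, Finset.coe_singleton, SimpleGraph.isClique_iff,
              Set.pairwise_pair]
            exact fun _ => ⟨he, he.symm⟩
        rw [he]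
        norm_num
      | (r + 2), _ =>
        have h1 : (1 : ℕ) ≤ r + 1 := by omega
        have h2 : Fintype.card V + (r + 1) ≤ N := by omega
        have := IH G (r + 1) h1 h2 hcf
        refine this.trans ?_
        push_cast
        have hle : 1 / ((r : ℝ) + 2) ≤ 1 / ((r : ℝ) + 1) :=
          one_div_le_one_div_of_le (by positivity) (by linarith)
        have h2 : (0 : ℝ) ≤ (Fintype.card V : ℝ) ^ 2 := sq_nonneg _
        nlinarith
    · -- extract an r-clique A
      rw [CliqueFree] at hcf
      push_neg at hcf
      obtain ⟨A, hA⟩ := hcf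
      set s : Set V := (↑(Aᶜ) : Set V) with hs
      haveI : DecidableRel (G.induce s).Adj := fun a b =>
        inferInstanceAs (Decidable (G.Adj a b))
      have hfree' : (G.induce s).CliqueFree (r + 1) :=
        hfree.comap (SimpleGraph.Embedding.induce s).isContained
      set n := Fintype.card V with hn
      set M := #(Aᶜ) with hM
      have hMs : Fintype.card ↥s = M :=
        (Fintype.card_congr (Equiv.subtypeEquivRight (fun x => by
          simp [hs]))).trans (Fintype.card_coe _)
      have hMn : M + r = n := by
        rw [hM, hn, ← hA.2]
        exact A.card_compl_add_card
      -- notation for neighbor counts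
      set f : V → ℕ := fun v => #(G.neighborFinset v ∩ A) with hf
      set g : V → ℕ := fun v => #(G.neighborFinset v \ A) with hg
      have hfg : ∀ v, f v + g v = G.degree v := fun v =>
        Finset.card_inter_add_card_sdiff _ _
      -- key bound: every vertex has at most r - 1 neighbors in A
      have hB : ∀ v, f v + 1 ≤ r := by
        intro v
        by_contra h
        push_neg at h
        have hrle : #A ≤ #(G.neighborFinset v ∩ A) := by
          rw [hA.2]
          simp only [hf] at h
          omega
        have heq : G.neighborFinset v ∩ A = A :=
          Finset.eq_of_subset_of_card_le Finset.inter_subset_right hrle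
        have hsub : A ⊆ G.neighborFinset v := by
          intro a ha
          have : a ∈ G.neighborFinset v ∩ A := by rw [heq]; exact ha
          exact (Finset.mem_inter.mp this).1
        have hadj : ∀ b ∈ A, G.Adj v b := by
          intro b hb; exact (mem_neighborFinset _ _ _).mp (hsub hb)
        have hvA : v ∉ A := fun hv => G.irrefl (hadj v hv)
        exact hfree (insert v A) (hA.insert fun b hb => hadj b hb)
      -- expressing counts as sums of indicators
      have hfsum : ∀ v, f v = ∑ w ∈ A, if G.Adj v w then 1 else 0 := by
        intro v
        rw [← Finset.card_filter]
        show #(G.neighborFinset v ∩ A) = _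
        congr 1
        ext w
        simp [mem_neighborFinset, and_comm]
      have hgsum : ∀ v, g v = ∑ w ∈ Aᶜ, if G.Adj v w then 1 else 0 := by
        intro v
        rw [← Finset.card_filter]
        show #(G.neighborFinset v \ A) = _
        congr 1
        ext w
        simp [mem_neighborFinset, and_comm]
      -- double counting of cross edges
      have hswap : ∑ v ∈ A, g v = ∑ w ∈ Aᶜ, f w := by
        simp only [hgsum, hfsum]
        rw [Finset.sum_comm]
        apply Finset.sum_congr rfl
        intro w _
        apply Finset.sum_congr rfl
        intro v _
        simp [G.adj_comm]
      -- edges of induced graph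
      have hdeg' : ∀ x : ↥s, (G.induce s).degree x = g ↑x := by
        intro x
        show #((G.induce s).neighborFinset x) = #(G.neighborFinset (↑x) \ A)
        refine Finset.card_bij (fun w _ => (w : V)) ?_ ?_ ?_
        · intro w hw
          rw [mem_neighborFinset] at hw
          have hadj : G.Adj ↑x ↑w := hw
          have : (w : V) ∈ (↑(Aᶜ) : Set V) := w.2
          simp only [Finset.coe_compl, Set.mem_compl_iff, Finset.mem_coe] at this
          exact Finset.mem_sdiff.mpr ⟨(mem_neighborFinset _ _ _).mpr hadj, this⟩
        · intro a _ b _ hab; exact Subtype.ext hab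
        · intro b hb
          rw [Finset.mem_sdiff, mem_neighborFinset] at hb
          refine ⟨⟨b, by simp [hs, hb.2]⟩, ?_, rfl⟩
          rw [mem_neighborFinset]
          exact hb.1
      have hsum_g : ∑ w ∈ Aᶜ, g w = 2 * #(G.induce s).edgeFinset := by
        rw [← SimpleGraph.sum_degrees_eq_twice_card_edges,
          show (∑ x : ↥s, (G.induce s).degree x) = ∑ x : ↥s, g ↑x from
            Finset.sum_congr rfl fun x _ => hdeg' x]
        exact Finset.sum_subtype (Aᶜ) (fun x => by simp [hs]) g
      -- main natural-number inequality
      set E := #G.edgeFinset with hE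
      set E' := #(G.induce s).edgeFinset with hE'
      have hdegsplitA : ∑ v ∈ A, G.degree v = ∑ v ∈ A, f v + ∑ v ∈ A, g v := by
        rw [← Finset.sum_add_distrib]
        exact Finset.sum_congr rfl fun v _ => (hfg v).symm
      have hbA : ∑ v ∈ A, f v + r ≤ r * r := by
        have hb : ∑ v ∈ A, (f v + 1) ≤ ∑ _v ∈ A, r :=
          Finset.sum_le_sum fun v _ => hB v
        rw [Finset.sum_add_distrib, Finset.sum_const, Finset.sum_const, hA.2,
          smul_eq_mul, smul_eq_mul, mul_one] at hb
        omega
      have hSA : ∑ v ∈ A, G.degree v + r ≤ r * r + ∑ w ∈ Aᶜ, f w := by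
        rw [hdegsplitA, hswap]
        omega
      have hSAc : ∑ v ∈ Aᶜ, G.degree v = ∑ w ∈ Aᶜ, f w + 2 * E' := by
        rw [← hsum_g, ← Finset.sum_add_distrib]
        apply Finset.sum_congr rfl; intro v _; rw [hfg]
      have hC : ∑ w ∈ Aᶜ, f w + M ≤ M * r := by
        have hb : ∑ w ∈ Aᶜ, (f w + 1) ≤ ∑ _w ∈ Aᶜ, r :=
          Finset.sum_le_sum fun v _ => hB v
        rw [Finset.sum_const, smul_eq_mul, Finset.sum_add_distrib, Finset.sum_const,
          smul_eq_mul, mul_one] at hb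
        rw [← hM] at hb
        omega
      have htotal : ∑ v ∈ A, G.degree v + ∑ v ∈ Aᶜ, G.degree v = 2 * E := by
        rw [Finset.sum_add_sum_compl, hE, SimpleGraph.sum_degrees_eq_twice_card_edges]
      have hmain : 2 * E + r + 2 * M ≤ r * r + 2 * (M * r) + 2 * E' := by omega
      -- apply induction hypothesis to induced graph
      have hIH : (E' : ℝ) ≤ (1 - 1 / (r : ℝ)) * (M : ℝ) ^ 2 / 2 := by
        have := IH (G.induce s) r hr (by rw [hMs]; omega) hfree'
        rwa [hMs] at this
      -- final real arithmetic
      have hr0 : (0 : ℝ) < r := by exact_mod_cast hr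
      have hinv : (r : ℝ) * (1 / r) = 1 := by field_simp
      have hcast : 2 * (E : ℝ) + r + 2 * M ≤ r * r + 2 * (M * r) + 2 * E' := by
        exact_mod_cast hmain
      have hncast : (n : ℝ) = (M : ℝ) + (r : ℝ) := by exact_mod_cast hMn.symm
      have hIH2 : 2 * (r : ℝ) * E' ≤ ((r : ℝ) - 1) * (M : ℝ) ^ 2 := by
        have h := mul_le_mul_of_nonneg_left hIH (by positivity : (0 : ℝ) ≤ 2 * r)
        calc 2 * (r : ℝ) * E' = 2 * r * E' := by ring
          _ ≤ 2 * r * ((1 - 1 / r) * (M : ℝ) ^ 2 / 2) := h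
          _ = ((r : ℝ) - 1) * (M : ℝ) ^ 2 := by field_simp
      clear_value n M E E'
      clear hM hE hE' hmain hIH hfsum hgsum hswap hdeg' hsum_g hSA hSAc hC htotal
        hdegsplitA hbA hB hfg hMs hMn hN
      have key : 2 * (r : ℝ) * E ≤ ((r : ℝ) - 1) * ((M : ℝ) + r) ^ 2 := by
        have hcr := mul_le_mul_of_nonneg_left hcast (le_of_lt hr0)
        nlinarith [hcr, hIH2]
      have heq2 : (1 - 1 / (r : ℝ)) * ((M : ℝ) + r) ^ 2 / 2
          = ((r : ℝ) - 1) * ((M : ℝ) + r) ^ 2 / (2 * r) := by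
        rw [div_eq_div_iff (by norm_num) (by positivity)]
        field_simp
      rw [hncast, heq2, le_div_iff₀ (by positivity)]
      linarith [key]

/-- **Turán's theorem (simple form).** Every simple graph on `n` vertices that contains no
clique on `r + 1` vertices (where `r ≥ 1`) has at most `(1 - 1/r) * n^2 / 2` edges. -/
theorem stmt_0 {V : Type*} [Fintype V] (G : SimpleGraph V) [DecidableRel G.Adj]
    (r : ℕ) (hr : 1 ≤ r) (hfree : G.CliqueFree (r + 1)) :
    (G.edgeFinset.card : ℝ) ≤ (1 - 1 / (r : ℝ)) * (Fintype.card V : ℝ) ^ 2 / 2 := by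
  classical
  exact turan_aux (Fintype.card V + r) G r hr le_rfl hfree
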